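/- arXiv:0706.2844 — 2 statements merged into one kernel-verified Lean document; each statement's English description precedes it below -/
import Mathlib

section
/- For any finite connected subgraph G' = (V', E') of a graph, the combinatorial Laplacian H^N(G') = D(G') - A(G') satisfies: its smallest nonzero eigenvalue λ^N(G') is at least 2 / (|V'| · diam(G')), and in particular at least 2/|V'|². -/
open scoped BigOperators Classical

private lemma laplacian_cs_step (x y l T : ℝ) (hl : 0 ≤ l) (hT : 0 ≤ T) (ih : y ^ 2 ≤ l * T) :
    (x + y) ^ 2 ≤ (l + 1) * (x ^ 2 + T) := by
  rcases eq_or_lt_of_le hl with h0 | hpos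
  · have hy : y = 0 := by nlinarith [sq_nonneg y]
    rw [hy]; nlinarith
  · have key : l * ((l + 1) * (x ^ 2 + T) - (x + y) ^ 2)
        = (l * x - y) ^ 2 + (l + 1) * (l * T - y ^ 2) := by ring
    have h2 : 0 ≤ (l * x - y) ^ 2 + (l + 1) * (l * T - y ^ 2) :=
      add_nonneg (sq_nonneg _) (mul_nonneg (by linarith) (by linarith))
    have h3 : 0 ≤ (l + 1) * (x ^ 2 + T) - (x + y) ^ 2 := by
      have := key ▸ h2
      exact (mul_nonneg_iff_of_pos_left hpos).mp this
    linarith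

private lemma laplacian_walk_sq_le {V : Type*} {G : SimpleGraph V} (φ : V → ℝ) {a b : V}
    (p : G.Walk a b) :
    (φ a - φ b) ^ 2 ≤ (p.length : ℝ) *
      (p.darts.map fun d => (φ d.fst - φ d.snd) ^ 2).sum := by
  induction p with
  | nil => simp
  | @cons a b' c h q ih =>
      have hT : (0:ℝ) ≤ (q.darts.map fun d => (φ d.fst - φ d.snd) ^ 2).sum := by
        apply List.sum_nonneg
        intro x hx
        obtain ⟨d, -, rfl⟩ := List.mem_map.mp hx
        positivity
      have hl : (0:ℝ) ≤ (q.length : ℝ) := by positivity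
      simp only [SimpleGraph.Walk.length_cons, SimpleGraph.Walk.darts_cons, List.map_cons,
        List.sum_cons, Nat.cast_add, Nat.cast_one]
      have hab : φ a - φ c = (φ a - φ b') + (φ b' - φ c) := by ring
      rw [hab]
      exact laplacian_cs_step _ _ _ _ hl hT ih

/-- For a finite connected graph `G`, every nonzero eigenvalue `μ` of the
combinatorial Laplacian `H^N` (acting by `(H^N φ) x = deg x * φ x - ∑_{y ~ x} φ y`) satisfies
`μ ≥ 2 / (|V| * diam G)` and in particular `μ ≥ 2 / |V|^2`. -/
theorem smallest_nonzero_eigenvalue_combinatorial_laplacian_lower_bound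
    {V : Type*} [Fintype V] (G : SimpleGraph V) (hconn : G.Connected)
    (μ : ℝ) (φ : V → ℝ) (hφ : φ ≠ 0)
    (heig : ∀ x : V,
      (Nat.card (G.neighborSet x) : ℝ) * φ x - ∑ᶠ y ∈ G.neighborSet x, φ y = μ * φ x)
    (hμ : μ ≠ 0) :
    2 / ((Fintype.card V : ℝ) * (Finset.univ.sup fun p : V × V => G.dist p.1 p.2 : ℕ)) ≤ μ ∧
    2 / ((Fintype.card V : ℝ) ^ 2) ≤ μ := by
  classical
  -- nonemptiness
  have hVne : Nonempty V := by
    by_contra h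
    rw [not_nonempty_iff] at h
    exact hφ (funext fun x => isEmptyElim x)
  set n : ℕ := Fintype.card V with hn
  have hnpos : 0 < n := Fintype.card_pos
  set D : ℕ := Finset.univ.sup fun p : V × V => G.dist p.1 p.2 with hD
  -- rewrite eigenvalue equation in Finset form
  have heig' : ∀ x : V,
      (G.degree x : ℝ) * φ x - ∑ y ∈ G.neighborFinset x, φ y = μ * φ x := by
    intro x
    have h := heig x
    have h1 : Nat.card (G.neighborSet x) = G.degree x := by
      rw [Nat.card_eq_fintype_card]
      exact G.card_neighborSet_eq_degree x
    have h2 : ∑ᶠ y ∈ G.neighborSet x, φ y = ∑ y ∈ G.neighborFinset x, φ y := by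
      rw [← finsum_mem_coe_finset, SimpleGraph.coe_neighborFinset]
    rw [h1, h2] at h
    exact h
  -- symmetry swap
  have hswap : ∀ f : V → ℝ,
      ∑ x, ∑ y ∈ G.neighborFinset x, f y = ∑ x, (G.degree x : ℝ) * f x := by
    intro f
    simp_rw [SimpleGraph.neighborFinset_eq_filter, Finset.sum_filter]
    rw [Finset.sum_comm]
    refine Finset.sum_congr rfl fun y _ => ?_
    have hfil : (Finset.univ.filter fun x => G.Adj x y) = G.neighborFinset y := by
      ext x; simp [G.adj_comm]
    rw [← Finset.sum_filter, hfil, Finset.sum_const, nsmul_eq_mul, SimpleGraph.degree]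
  -- sum of φ is zero
  have hsum0 : ∑ x, φ x = 0 := by
    have h : ∑ x, ((G.degree x : ℝ) * φ x - ∑ y ∈ G.neighborFinset x, φ y)
        = μ * ∑ x, φ x := by
      rw [Finset.mul_sum]
      exact Finset.sum_congr rfl fun x _ => heig' x
    rw [Finset.sum_sub_distrib, hswap φ, sub_self] at h
    exact (mul_eq_zero.mp h.symm).resolve_left hμ
  -- Rayleigh identity
  have hRay : ∑ x, ∑ y ∈ G.neighborFinset x, (φ x - φ y) ^ 2
      = 2 * μ * ∑ x, φ x ^ 2 := by
    have hx1 : ∀ x : V, ∑ y ∈ G.neighborFinset x, (φ x - φ y) ^ 2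
        = (G.degree x : ℝ) * φ x ^ 2 - 2 * φ x * (∑ y ∈ G.neighborFinset x, φ y)
          + ∑ y ∈ G.neighborFinset x, φ y ^ 2 := by
      intro x
      have hc : (G.degree x : ℝ) * φ x ^ 2 = ∑ y ∈ G.neighborFinset x, φ x ^ 2 := by
        rw [Finset.sum_const, nsmul_eq_mul, SimpleGraph.card_neighborFinset_eq_degree]
      rw [hc, Finset.mul_sum, ← Finset.sum_sub_distrib, ← Finset.sum_add_distrib]
      exact Finset.sum_congr rfl fun y _ => by ring
    calc ∑ x, ∑ y ∈ G.neighborFinset x, (φ x - φ y) ^ 2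
        = ∑ x, ((G.degree x : ℝ) * φ x ^ 2 - 2 * φ x * (∑ y ∈ G.neighborFinset x, φ y)
            + ∑ y ∈ G.neighborFinset x, φ y ^ 2) := Finset.sum_congr rfl fun x _ => hx1 x
      _ = ∑ x, ((G.degree x : ℝ) * φ x ^ 2
            - 2 * φ x * ((G.degree x : ℝ) * φ x - μ * φ x))
          + ∑ x, ∑ y ∈ G.neighborFinset x, φ y ^ 2 := by
          rw [← Finset.sum_add_distrib]
          refine Finset.sum_congr rfl fun x _ => ?_
          have := heig' x
          have h2 : ∑ y ∈ G.neighborFinset x, φ y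
              = (G.degree x : ℝ) * φ x - μ * φ x := by linarith
          rw [h2]
      _ = ∑ x, ((G.degree x : ℝ) * φ x ^ 2
            - 2 * φ x * ((G.degree x : ℝ) * φ x - μ * φ x))
          + ∑ x, (G.degree x : ℝ) * φ x ^ 2 := by rw [hswap fun y => φ y ^ 2]
      _ = 2 * μ * ∑ x, φ x ^ 2 := by
          rw [Finset.mul_sum, ← Finset.sum_add_distrib]
          exact Finset.sum_congr rfl fun x _ => by ring
  -- positivity facts
  have hsumsq_pos : 0 < ∑ x, φ x ^ 2 := by
    obtain ⟨x, hx⟩ := Function.ne_iff.mp hφ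
    have : (0:ℝ) < φ x ^ 2 := lt_of_le_of_ne (sq_nonneg _) (Ne.symm (pow_ne_zero 2 hx))
    exact Finset.sum_pos' (fun y _ => sq_nonneg _) ⟨x, Finset.mem_univ x, this⟩
  have hSnonneg : 0 ≤ ∑ x, ∑ y ∈ G.neighborFinset x, (φ x - φ y) ^ 2 :=
    Finset.sum_nonneg fun x _ => Finset.sum_nonneg fun y _ => sq_nonneg _
  have hμpos : 0 < μ := by
    rcases lt_or_gt_of_ne hμ with h | h
    · exfalso
      have : 2 * μ * ∑ x, φ x ^ 2 < 0 := by
        apply mul_neg_of_neg_of_pos _ hsumsq_pos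
        linarith
      linarith [hRay ▸ hSnonneg]
    · exact h
  -- extremes
  obtain ⟨u, -, hu⟩ := Finset.exists_max_image Finset.univ φ ⟨Classical.arbitrary V,
    Finset.mem_univ _⟩
  obtain ⟨v, -, hv⟩ := Finset.exists_min_image Finset.univ φ ⟨Classical.arbitrary V,
    Finset.mem_univ _⟩
  have hu' : ∀ x : V, φ x ≤ φ u := fun x => hu x (Finset.mem_univ x)
  have hv' : ∀ x : V, φ v ≤ φ x := fun x => hv x (Finset.mem_univ x)
  have hMpos : 0 < φ u := by
    by_contra h
    push_neg at h
    have hall : ∀ x ∈ Finset.univ, φ x ≤ 0 := fun x _ => le_trans (hu' x) h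
    have := (Finset.sum_eq_zero_iff_of_nonpos hall).mp hsum0
    exact hφ (funext fun x => this x (Finset.mem_univ x))
  have hmneg : φ v < 0 := by
    by_contra h
    push_neg at h
    have hall : ∀ x ∈ Finset.univ, 0 ≤ φ x := fun x _ => le_trans h (hv' x)
    have := (Finset.sum_eq_zero_iff_of_nonneg hall).mp hsum0
    exact absurd (this u (Finset.mem_univ u)) (ne_of_gt hMpos)
  -- bound sum of squares
  have hsumsq_le : ∑ x, φ x ^ 2 ≤ (n : ℝ) * (φ u * (-φ v)) := by
    have key : ∀ x : V, φ x ^ 2 ≤ (φ u + φ v) * φ x - φ u * φ v := fun x => by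
      nlinarith [hu' x, hv' x]
    calc ∑ x, φ x ^ 2 ≤ ∑ x, ((φ u + φ v) * φ x - φ u * φ v) :=
          Finset.sum_le_sum fun x _ => key x
      _ = (φ u + φ v) * (∑ x, φ x) - (n : ℝ) * (φ u * φ v) := by
          rw [Finset.sum_sub_distrib, ← Finset.mul_sum, Finset.sum_const, Finset.card_univ,
            nsmul_eq_mul, hn]
      _ = (n : ℝ) * (φ u * (-φ v)) := by rw [hsum0]; ring
  -- the path from u to v
  have huv : u ≠ v := by
    intro h; rw [h] at hMpos; linarith
  obtain ⟨p, hp⟩ := hconn.exists_walk_length_eq_dist u v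
  set q : G.Walk u v := p.bypass with hq
  have hqpath : q.IsPath := p.bypass_isPath
  have hqlen : q.length ≤ D := by
    calc q.length ≤ p.length := p.length_bypass_le
      _ = G.dist u v := hp
      _ ≤ D := Finset.le_sup (f := fun p : V × V => G.dist p.1 p.2)
          (Finset.mem_univ (u, v))
  -- the edge set sum S as a filtered sum over pairs
  set A : Finset (V × V) := Finset.univ.filter fun p : V × V => G.Adj p.1 p.2 with hA
  have hAS : ∑ pr ∈ A, (φ pr.1 - φ pr.2) ^ 2
      = ∑ x, ∑ y ∈ G.neighborFinset x, (φ x - φ y) ^ 2 := by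
    rw [hA, Finset.sum_filter, ← Finset.univ_product_univ, Finset.sum_product]
    refine Finset.sum_congr rfl fun x _ => ?_
    rw [SimpleGraph.neighborFinset_eq_filter, Finset.sum_filter]
  -- path sum bounded by S
  have hdartsnd : (q.darts.map SimpleGraph.Dart.toProd).Nodup := by
    have h1 : q.darts.Nodup :=
      SimpleGraph.Walk.darts_nodup_of_support_nodup hqpath.support_nodup
    exact h1.map SimpleGraph.Dart.toProd_injective
  have hpathS : (q.darts.map fun d => (φ d.fst - φ d.snd) ^ 2).sum
      ≤ ∑ pr ∈ A, (φ pr.1 - φ pr.2) ^ 2 := by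
    have hmap : (q.darts.map fun d => (φ d.fst - φ d.snd) ^ 2)
        = (q.darts.map SimpleGraph.Dart.toProd).map fun pr => (φ pr.1 - φ pr.2) ^ 2 := by
      rw [List.map_map]; rfl
    rw [hmap, ← List.sum_toFinset _ hdartsnd]
    apply Finset.sum_le_sum_of_subset_of_nonneg
    · intro pr hpr
      rw [List.mem_toFinset, List.mem_map] at hpr
      obtain ⟨d, -, rfl⟩ := hpr
      rw [hA, Finset.mem_filter]
      exact ⟨Finset.mem_univ _, d.adj⟩
    · intro pr _ _
      positivity
  -- main chain
  have hchain : (φ u - φ v) ^ 2 ≤ (D : ℝ) * (2 * μ * ((n : ℝ) * (φ u * (-φ v)))) := by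
    have hps_nonneg : (0:ℝ) ≤ (q.darts.map fun d => (φ d.fst - φ d.snd) ^ 2).sum := by
      apply List.sum_nonneg
      intro x hx
      obtain ⟨d, -, rfl⟩ := List.mem_map.mp hx
      positivity
    calc (φ u - φ v) ^ 2
        ≤ (q.length : ℝ) * (q.darts.map fun d => (φ d.fst - φ d.snd) ^ 2).sum :=
          laplacian_walk_sq_le φ q
      _ ≤ (D : ℝ) * (q.darts.map fun d => (φ d.fst - φ d.snd) ^ 2).sum := by
          apply mul_le_mul_of_nonneg_right _ hps_nonneg
          exact_mod_cast hqlen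
      _ ≤ (D : ℝ) * (2 * μ * ∑ x, φ x ^ 2) := by
          apply mul_le_mul_of_nonneg_left _ (Nat.cast_nonneg D)
          rw [← hRay, ← hAS]
          exact hpathS
      _ ≤ (D : ℝ) * (2 * μ * ((n : ℝ) * (φ u * (-φ v)))) := by
          apply mul_le_mul_of_nonneg_left _ (Nat.cast_nonneg D)
          apply mul_le_mul_of_nonneg_left hsumsq_le (by linarith)
  -- D ≥ 1 and D ≤ n
  have hDpos : 0 < D := by
    have h1 : 0 < G.dist u v := hconn.pos_dist_of_ne huv
    calc 0 < G.dist u v := h1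
      _ ≤ D := Finset.le_sup (f := fun p : V × V => G.dist p.1 p.2) (Finset.mem_univ (u, v))
  have hDle : D ≤ n := by
    rw [hD]
    apply Finset.sup_le
    intro pr _
    obtain ⟨w, hw⟩ := hconn.exists_walk_length_eq_dist pr.1 pr.2
    calc G.dist pr.1 pr.2 ≤ w.bypass.length := SimpleGraph.dist_le w.bypass
      _ ≤ n := le_of_lt w.bypass_isPath.length_lt
  -- conclude the first inequality
  have hprod : 0 < φ u * (-φ v) := mul_pos hMpos (by linarith)
  have hnD : (0:ℝ) < (n : ℝ) * (D : ℝ) := by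
    apply mul_pos
    · exact_mod_cast hnpos
    · exact_mod_cast hDpos
  have hfirst : 2 / ((n : ℝ) * (D : ℝ)) ≤ μ := by
    rw [div_le_iff₀ hnD]
    -- from (φu - φv)^2 ≥ 4 φu (-φv) and hchain
    have hamgm : 4 * (φ u * (-φ v)) ≤ (φ u - φ v) ^ 2 := by nlinarith [sq_nonneg (φ u + φ v)]
    have h2 : 4 * (φ u * (-φ v)) ≤ 2 * μ * ((n : ℝ) * (D : ℝ)) * (φ u * (-φ v)) := by
      calc 4 * (φ u * (-φ v)) ≤ (φ u - φ v) ^ 2 := hamgm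
        _ ≤ (D : ℝ) * (2 * μ * ((n : ℝ) * (φ u * (-φ v)))) := hchain
        _ = 2 * μ * ((n : ℝ) * (D : ℝ)) * (φ u * (-φ v)) := by ring
    nlinarith [h2, hprod, hμpos, hnD]
  refine ⟨hfirst, ?_⟩
  have hsecond : 2 / ((n : ℝ) ^ 2) ≤ 2 / ((n : ℝ) * (D : ℝ)) := by
    apply div_le_div_of_nonneg_left (by norm_num) hnD
    have : (D : ℝ) ≤ (n : ℝ) := by exact_mod_cast hDle
    have hnn : (0:ℝ) ≤ (n : ℝ) := Nat.cast_nonneg n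
    nlinarith
  exact le_trans hsecond hfirst
end

section
/- Let G be a quasi-transitive graph with subcritical site percolation such that cluster sizes decay exponentially: P(|C_x(ω)| ≥ n) ≤ e^{−a_p n} for all vertices x and positive integers n. Assume there is a continuous strictly decreasing function f: [1,∞) → ℝ⁺ with lim_{s→∞} f(s) = 0 such that every finite cluster C satisfies λ^#(C) ≥ f(|C|) (the smallest nonzero eigenvalue of the percolation Laplacian on C). Then the integrated density of states satisfies N^#(E) − N^#(0) ≤ e^{−a_p f^{−1}(E)} for all E ∈ (0, f(1)). -/
open scoped BigOperators Classical Pointwise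
open MeasureTheory ProbabilityTheory Filter

noncomputable section

variable {V : Type*}

/-- The subgraph of `G` kept by the site-percolation configuration `ω` (an edge is retained
iff both of its endpoints are open). -/
def percGraph (G : SimpleGraph V) (ω : V → Bool) : SimpleGraph V where
  Adj x y := G.Adj x y ∧ ω x = true ∧ ω y = true
  symm := ⟨fun _ _ h => ⟨h.1.symm, h.2.2, h.2.1⟩⟩
  loopless := ⟨fun x h => G.loopless.irrefl x h.1⟩

/-- The percolation cluster of the vertex `x` in the configuration `ω` (empty if `x` is closed). -/
def cluster (G : SimpleGraph V) (ω : V → Bool) (x : V) : Set V :=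
  {y | ω x = true ∧ (percGraph G ω).Reachable x y}

/-- `⟨δ_x, χ_{(−∞,E]}(M) δ_x⟩`, the diagonal matrix element of the spectral projection up to
energy `E` of the finite hermitian matrix `M` indexed by `C` (junk value `0` otherwise). -/
def specDiag (C : Set V) (M : Matrix C C ℝ) (x : V) (E : ℝ) : ℝ :=
  if h : C.Finite ∧ M.IsHermitian ∧ x ∈ C then
    haveI : Fintype C := h.1.fintype
    ∑ i, if h.2.1.eigenvalues i ≤ E then (h.2.1.eigenvectorBasis i) ⟨x, h.2.2⟩ ^ 2 else 0
  else 0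

/-- The integrated density of states
`N(E) = |F|⁻¹ ∑_{x ∈ F} 𝔼[⟨δ_x, χ_{(−∞,E]}(H(C_x(ω))) δ_x⟩]` of the random operator whose
restriction to a cluster `C` is given by the matrix `Hmat C` (valid whenever the clusters are
almost surely finite, so that the percolation Hamiltonian is the direct sum of its restrictions
to the clusters). -/
def IDS (G : SimpleGraph V) (Pr : Measure (V → Bool))
    (Hmat : ∀ C : Set V, Matrix C C ℝ) (F : Finset V) (E : ℝ) : ℝ :=
  (F.card : ℝ)⁻¹ * ∑ x ∈ F, ∫ ω, specDiag (cluster G ω x) (Hmat (cluster G ω x)) x E ∂Pr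

/-- The combinatorial (Neumann) Laplacian `H^N = D − A` of the subgraph of `G` induced by `C`. -/
def lapNMat (G : SimpleGraph V) (C : Set V) : Matrix C C ℝ := fun a b =>
  (if a = b then (Nat.card ↥(C ∩ G.neighborSet ↑a) : ℝ) else 0) -
    (if G.Adj ↑a ↑b then 1 else 0)

/-- The adjacency Laplacian `H^A = k·Id − A` of the subgraph of `G` induced by `C`. -/
def lapAMat (G : SimpleGraph V) (k : ℕ) (C : Set V) : Matrix C C ℝ := fun a b =>
  (if a = b then (k : ℝ) else 0) - (if G.Adj ↑a ↑b then 1 else 0)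

/-- The Dirichlet Laplacian `H^D = 2k·Id − D − A` of the subgraph of `G` induced by `C`. -/
def lapDMat (G : SimpleGraph V) (k : ℕ) (C : Set V) : Matrix C C ℝ := fun a b =>
  (if a = b then 2 * (k : ℝ) - (Nat.card ↥(C ∩ G.neighborSet ↑a) : ℝ) else 0) -
    (if G.Adj ↑a ↑b then 1 else 0)

/-- The event that the finite set `C` is (the vertex set of) a cluster of the site-percolation
graph: all vertices of `C` are open and every vertex adjacent to `C` but outside `C` is closed. -/
def isClusterOf (G : SimpleGraph V) (ω : V → Bool) (C : Set V) : Prop :=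
  (∀ y ∈ C, ω y = true) ∧ ∀ z ∉ C, (∃ y ∈ C, G.Adj y z) → ω z = false

end
section AuxSpec

lemma sum_sq_eigenvectorBasis {n : Type*} [Fintype n] [DecidableEq n]
    {M : Matrix n n ℝ} (hM : M.IsHermitian) (j : n) :
    ∑ i, (hM.eigenvectorBasis i) j ^ 2 = 1 := by
  have h := hM.eigenvectorBasis.sum_inner_mul_inner (𝕜 := ℝ)
      (EuclideanSpace.single j (1:ℝ)) (EuclideanSpace.single j (1:ℝ))
  simp only [EuclideanSpace.inner_single_left, EuclideanSpace.inner_single_right,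
    RCLike.conj_to_real, starRingEnd_apply, star_trivial, one_mul, mul_one] at h
  calc ∑ i, (hM.eigenvectorBasis i) j ^ 2
      = ∑ i, (hM.eigenvectorBasis i) j * (hM.eigenvectorBasis i) j := by
        simp [pow_two]
    _ = 1 := by rw [h]; simp [EuclideanSpace.single_apply]

lemma eigenvectorBasis_ne_zero {n : Type*} [Fintype n] [DecidableEq n]
    {M : Matrix n n ℝ} (hM : M.IsHermitian) (i : n) :
    (fun y => hM.eigenvectorBasis i y) ≠ (0 : n → ℝ) := by
  intro h0
  have h1 : hM.eigenvectorBasis i = (0 : EuclideanSpace ℝ n) := by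
    ext y
    simpa using congrFun h0 y
  have := hM.eigenvectorBasis.orthonormal.1 i
  rw [h1] at this
  simp at this

lemma eigenvectorBasis_eigen {n : Type*} [Fintype n] [DecidableEq n]
    {M : Matrix n n ℝ} (hM : M.IsHermitian) (i : n) (x : n) :
    (∑ᶠ y : n, M x y * hM.eigenvectorBasis i y) =
      hM.eigenvalues i * hM.eigenvectorBasis i x := by
  have h := congrFun (hM.mulVec_eigenvectorBasis i) x
  rw [finsum_eq_sum_of_fintype]
  simpa [Matrix.mulVec, dotProduct] using h

end AuxSpec
section AuxCluster

variable {V : Type*}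

lemma percGraph_adj_iff {G : SimpleGraph V} {ω : V → Bool} {x y : V} :
    (percGraph G ω).Adj x y ↔ G.Adj x y ∧ ω x = true ∧ ω y = true := Iff.rfl

lemma percGraph_mono (G : SimpleGraph V) {ω ω' : V → Bool}
    (h : ∀ v, ω v = true → ω' v = true) : percGraph G ω ≤ percGraph G ω' :=
  fun _ _ hab => percGraph_adj_iff.2 ⟨(percGraph_adj_iff.1 hab).1, h _ (percGraph_adj_iff.1 hab).2.1, h _ (percGraph_adj_iff.1 hab).2.2⟩

lemma mem_cluster_self {G : SimpleGraph V} {ω : V → Bool} {x : V} (hx : ω x = true) :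
    x ∈ cluster G ω x := ⟨hx, .refl x⟩

lemma open_of_walk {G : SimpleGraph V} {ω : V → Bool} {u v : V}
    (w : (percGraph G ω).Walk u v) (hu : ω u = true) : ω v = true := by
  induction w with
  | nil => exact hu
  | cons h p ih => exact ih (percGraph_adj_iff.1 h).2.2

lemma open_of_mem_cluster {G : SimpleGraph V} {ω : V → Bool} {x y : V}
    (hy : y ∈ cluster G ω x) : ω y = true := by
  obtain ⟨hx, ⟨w⟩⟩ := hy
  exact open_of_walk w hx

lemma support_mem_cluster {G : SimpleGraph V} {ω : V → Bool} {x y : V}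
    (hx : ω x = true) (w : (percGraph G ω).Walk x y) :
    ∀ v ∈ w.support, v ∈ cluster G ω x :=
  fun v hv => ⟨hx, ⟨w.takeUntil v hv⟩⟩

lemma cluster_connected {G : SimpleGraph V} {ω : V → Bool} {x : V} (hx : ω x = true) :
    (G.induce (cluster G ω x)).Connected := by
  rw [SimpleGraph.connected_iff]
  refine ⟨?_, ⟨⟨x, mem_cluster_self hx⟩⟩⟩
  have key : ∀ {u y : V} (w : (percGraph G ω).Walk u y) (hu : u ∈ cluster G ω x)
      (hy : y ∈ cluster G ω x),
      (G.induce (cluster G ω x)).Reachable ⟨u, hu⟩ ⟨y, hy⟩ := by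
    intro u y w
    induction w with
    | nil => intro hu hy; exact .refl _
    | @cons u z y h p ih =>
      intro hu hy
      have hz : z ∈ cluster G ω x := ⟨hx, hu.2.trans h.reachable⟩
      have hadj : (G.induce (cluster G ω x)).Adj ⟨u, hu⟩ ⟨z, hz⟩ := by
        simp only [SimpleGraph.comap_adj, Function.Embedding.coe_subtype]
        exact (percGraph_adj_iff.1 h).1
      exact hadj.reachable.trans (ih hz hy)
  intro a b
  obtain ⟨u, hu⟩ := a
  obtain ⟨y, hy⟩ := b
  obtain ⟨w1⟩ := hu.2
  obtain ⟨w2⟩ := hy.2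
  exact (key w1 (mem_cluster_self hx) hu).symm.trans (key w2 (mem_cluster_self hx) hy)

lemma exists_gwalk {G : SimpleGraph V} {ω : V → Bool} {u v : V}
    (w : (percGraph G ω).Walk u v) : ∃ p : G.Walk u v, p.support = w.support := by
  induction w with
  | nil => exact ⟨.nil, rfl⟩
  | cons h p ih =>
    obtain ⟨q, hq⟩ := ih
    exact ⟨.cons (percGraph_adj_iff.1 h).1 q, by simp [hq]⟩

/-- The set of vertices with countably many neighbours. -/
def ctbl (G : SimpleGraph V) : Set V := {v | (G.neighborSet v).Countable}

/-- Vertices joined to `x` by a walk all of whose vertices have countable degree. -/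
def Rset (G : SimpleGraph V) (x : V) : Set V :=
  {y | ∃ p : G.Walk y x, ∀ v ∈ p.support, v ∈ ctbl G}

lemma mem_ctbl_of_mem_Rset {G : SimpleGraph V} {x y : V} (hy : y ∈ Rset G x) :
    y ∈ ctbl G := by
  obtain ⟨p, hp⟩ := hy
  exact hp y p.start_mem_support

lemma Rset_countable (G : SimpleGraph V) (x : V) : (Rset G x).Countable := by
  set Sk : ℕ → Set V := fun k =>
    {y | ∃ p : G.Walk y x, p.length ≤ k ∧ ∀ v ∈ p.support, v ∈ ctbl G} with hSk
  have hsub : Rset G x ⊆ ⋃ k, Sk k := by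
    rintro y ⟨p, hp⟩
    exact Set.mem_iUnion.2 ⟨p.length, p, le_refl _, hp⟩
  have hctbl : ∀ k, (Sk k).Countable := by
    intro k
    induction k with
    | zero =>
      refine Set.Countable.mono ?_ (Set.countable_singleton x)
      rintro y ⟨p, hlen, -⟩
      exact SimpleGraph.Walk.eq_of_length_eq_zero (Nat.le_zero.1 hlen)
    | succ k ih =>
      have hsub2 : Sk (k+1) ⊆ Sk k ∪ ⋃ w ∈ Sk k, G.neighborSet w := by
        rintro y ⟨p, hlen, hsup⟩
        cases p with
        | nil =>
          left
          exact ⟨.nil, Nat.zero_le _, hsup⟩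
        | @cons _ w _ h q =>
          have hw : w ∈ Sk k := by
            refine ⟨q, ?_, fun v hv => hsup v (by simp [hv])⟩
            simpa [Nat.succ_le_succ_iff] using hlen
          right
          exact Set.mem_biUnion hw h.symm
      refine Set.Countable.mono hsub2 (ih.union (ih.biUnion ?_))
      rintro w ⟨q, -, hsup⟩
      exact hsup w q.start_mem_support
  exact Set.Countable.mono hsub (Set.countable_iUnion hctbl)

lemma cluster_subset_Rset {G : SimpleGraph V} {ω : V → Bool} {x : V}
    (h : ∀ y ∈ cluster G ω x, y ∈ ctbl G) : cluster G ω x ⊆ Rset G x := by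
  rintro y ⟨hx, ⟨w⟩⟩
  obtain ⟨p, hp⟩ := exists_gwalk w
  refine ⟨p.reverse, ?_⟩
  intro v hv
  rw [SimpleGraph.Walk.support_reverse, List.mem_reverse, hp] at hv
  exact h v (support_mem_cluster hx w v hv)

end AuxCluster
section AuxMeas

variable {V : Type*}

lemma countable_determining {s : Set (V → Bool)} (hs : MeasurableSet s) :
    ∃ W : Set V, W.Countable ∧
      ∀ ω ω' : V → Bool, (∀ v ∈ W, ω v = ω' v) → (ω ∈ s ↔ ω' ∈ s) := by
  have hs' : MeasurableSet[⨆ v : V, MeasurableSpace.comap (fun ω : V → Bool => ω v)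
      inferInstance] s := hs
  rw [MeasurableSpace.measurableSet_iSup] at hs'
  clear hs
  induction hs' with
  | basic t ht =>
    obtain ⟨v, ht⟩ := ht
    obtain ⟨t', -, rfl⟩ := ht
    refine ⟨{v}, Set.countable_singleton v, fun ω ω' h => ?_⟩
    have := h v (Set.mem_singleton v)
    simp only [Set.mem_preimage, this]
  | empty => exact ⟨∅, Set.countable_empty, fun _ _ _ => Iff.rfl⟩
  | compl t ht ih =>
    obtain ⟨W, hW, hdet⟩ := ih
    exact ⟨W, hW, fun ω ω' h => not_congr (hdet ω ω' h)⟩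
  | iUnion g hg ih =>
    choose W hW hdet using ih
    refine ⟨⋃ n, W n, Set.countable_iUnion hW, fun ω ω' h => ?_⟩
    simp only [Set.mem_iUnion]
    exact exists_congr fun n => hdet n ω ω' fun v hv => h v (Set.mem_iUnion.2 ⟨n, hv⟩)

variable {G : SimpleGraph V}

/-- On the event that `C` is open and its boundary closed, the cluster of `x ∈ C` is
deterministic: it is the set of vertices reachable from `x` inside `C`. -/
lemma cluster_eq_of_isClusterOf {ω : V → Bool} {x : V} {C : Set V} (hxC : x ∈ C)
    (hopen : ∀ y ∈ C, ω y = true)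
    (hclosed : ∀ z ∉ C, (∃ y ∈ C, G.Adj y z) → ω z = false) :
    cluster G ω x = {y | ∃ hy : y ∈ C, (G.induce C).Reachable ⟨x, hxC⟩ ⟨y, hy⟩} := by
  have hx : ω x = true := hopen x hxC
  ext y
  constructor
  · rintro ⟨-, ⟨w⟩⟩
    have key : ∀ {u y : V} (w : (percGraph G ω).Walk u y) (hu : u ∈ C),
        ∃ hy : y ∈ C, (G.induce C).Reachable ⟨u, hu⟩ ⟨y, hy⟩ := by
      intro u y w
      induction w with
      | nil => exact fun hu => ⟨hu, .refl _⟩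
      | @cons u z y h p ih =>
        intro hu
        have hz : z ∈ C := by
          by_contra hzC
          have := hclosed z hzC ⟨u, hu, (percGraph_adj_iff.1 h).1⟩
          rw [(percGraph_adj_iff.1 h).2.2] at this
          exact Bool.noConfusion this
        obtain ⟨hy, hr⟩ := ih hz
        have hadj : (G.induce C).Adj ⟨u, hu⟩ ⟨z, hz⟩ := by
          simp only [SimpleGraph.comap_adj, Function.Embedding.coe_subtype]
          exact (percGraph_adj_iff.1 h).1
        exact ⟨hy, hadj.reachable.trans hr⟩
    exact key w hxC
  · rintro ⟨hy, ⟨w⟩⟩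
    have key : ∀ (a b : ↥C) (w : (G.induce C).Walk a b), (percGraph G ω).Reachable ↑a ↑b := by
      intro a b w
      induction w with
      | nil => exact .refl _
      | @cons a c b h p ih =>
        have hadj : (percGraph G ω).Adj ↑a ↑c := by
          refine percGraph_adj_iff.2 ⟨h, hopen _ a.2, hopen _ c.2⟩
        exact hadj.reachable.trans ih
    exact ⟨hx, key _ _ w⟩

lemma measurableSet_cluster_fiber {x : V} {C : Set V} (hC : C.Finite) (hxC : x ∈ C)
    (hnb : ∀ y ∈ C, y ∈ ctbl G) :
    MeasurableSet {ω : V → Bool | cluster G ω x = C} := by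
  classical
  set RC : Set V := {y | ∃ hy : y ∈ C, (G.induce C).Reachable ⟨x, hxC⟩ ⟨y, hy⟩} with hRC
  set bd : Set V := {z | z ∉ C ∧ ∃ y ∈ C, G.Adj y z} with hbd
  have hbdc : bd.Countable := by
    refine Set.Countable.mono ?_ (hC.countable.biUnion fun y hy => hnb y hy)
    rintro z ⟨hz, y, hy, hadj⟩
    exact Set.mem_biUnion hy hadj
  have hmeas : MeasurableSet ((⋂ y ∈ C, (fun ω : V → Bool => ω y) ⁻¹' {true}) ∩
      ⋂ z ∈ bd, (fun ω : V → Bool => ω z) ⁻¹' {false}) := by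
    refine MeasurableSet.inter ?_ ?_
    · exact MeasurableSet.biInter hC.countable fun y _ =>
        (measurable_pi_apply y) (measurableSet_singleton true)
    · exact MeasurableSet.biInter hbdc fun z _ =>
        (measurable_pi_apply z) (measurableSet_singleton false)
  by_cases hRCC : RC = C
  · convert hmeas using 1
    ext ω
    simp only [Set.mem_setOf_eq, Set.mem_inter_iff, Set.mem_iInter, Set.mem_preimage,
      Set.mem_singleton_iff]
    constructor
    · intro h
      have hopen : ∀ y ∈ C, ω y = true := fun y hy => open_of_mem_cluster (h ▸ hy)
      have hclosed : ∀ z ∈ bd, ω z = false := by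
        rintro z ⟨hzC, y, hy, hadj⟩
        cases hωz : ω z with
        | false => rfl
        | true =>
          exfalso
          have hyc : y ∈ cluster G ω x := h ▸ hy
          have hz : z ∈ cluster G ω x := by
            refine ⟨hyc.1, hyc.2.trans ?_⟩
            exact SimpleGraph.Adj.reachable (percGraph_adj_iff.2 ⟨hadj, open_of_mem_cluster hyc, hωz⟩)
          rw [h] at hz
          exact hzC hz
      exact ⟨hopen, hclosed⟩
    · rintro ⟨hopen, hclosed⟩
      rw [cluster_eq_of_isClusterOf hxC hopen (fun z hz hex => hclosed z ⟨hz, hex⟩)]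
      exact hRCC
  · convert MeasurableSet.empty
    ext ω
    simp only [Set.mem_setOf_eq, Set.mem_empty_iff_false, iff_false]
    intro h
    have hopen : ∀ y ∈ C, ω y = true := fun y hy => open_of_mem_cluster (h ▸ hy)
    have hclosed : ∀ z ∉ C, (∃ y ∈ C, G.Adj y z) → ω z = false := by
      intro z hzC hex
      obtain ⟨y, hy, hadj⟩ := hex
      cases hωz : ω z with
      | false => rfl
      | true =>
        exfalso
        have hyc : y ∈ cluster G ω x := h ▸ hy
        have hz : z ∈ cluster G ω x := by
          refine ⟨hyc.1, hyc.2.trans ?_⟩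
          exact SimpleGraph.Adj.reachable (percGraph_adj_iff.2 ⟨hadj, open_of_mem_cluster hyc, hωz⟩)
        rw [h] at hz
        exact hzC hz
    exact hRCC ((cluster_eq_of_isClusterOf hxC hopen hclosed).symm.trans h)

end AuxMeas
section AuxNull

variable {V : Type*} {G : SimpleGraph V} {x : V} {a : ℝ}

lemma tendsto_expBound (ha : 0 < a) :
    Tendsto (fun n : ℕ => ENNReal.ofReal (Real.exp (-a * n))) atTop (nhds 0) := by
  have h0 : (fun n : ℕ => Real.exp (-a * n)) = fun n : ℕ => (Real.exp (-a)) ^ n := by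
    funext n
    rw [← Real.exp_nat_mul]
    ring_nf
  have h1 : Tendsto (fun n : ℕ => Real.exp (-a * n)) atTop (nhds 0) := by
    rw [h0]
    exact tendsto_pow_atTop_nhds_zero_of_lt_one (Real.exp_pos _).le
      (Real.exp_lt_one_iff.2 (neg_lt_zero.2 ha))
  simpa using ENNReal.tendsto_ofReal h1

lemma bad1_null (Pr : Measure (V → Bool)) (ha : 0 < a)
    (hdec : ∀ n : ℕ, 1 ≤ n →
      Pr {ω | (cluster G ω x).Infinite ∨ n ≤ Nat.card ↥(cluster G ω x)} ≤
        ENNReal.ofReal (Real.exp (-a * n))) :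
    Pr {ω : V → Bool | (cluster G ω x).Infinite} = 0 := by
  refine le_antisymm ?_ zero_le
  refine ge_of_tendsto (tendsto_expBound ha) ?_
  filter_upwards [eventually_ge_atTop 1] with n hn
  exact le_trans (measure_mono fun ω hω => Or.inl hω) (hdec n hn)

lemma bad2_null (Pr : Measure (V → Bool)) (ha : 0 < a)
    (hdec : ∀ n : ℕ, 1 ≤ n →
      Pr {ω | (cluster G ω x).Infinite ∨ n ≤ Nat.card ↥(cluster G ω x)} ≤
        ENNReal.ofReal (Real.exp (-a * n))) :
    Pr {ω : V → Bool | (cluster G ω x).Finite ∧ ∃ y ∈ cluster G ω x, y ∉ ctbl G} = 0 := by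
  refine le_antisymm ?_ zero_le
  refine ge_of_tendsto (tendsto_expBound ha) ?_
  filter_upwards [eventually_ge_atTop 1] with n hn
  set S := {ω : V → Bool | (cluster G ω x).Infinite ∨ n ≤ Nat.card ↥(cluster G ω x)} with hS
  set B := toMeasurable Pr S with hBdef
  obtain ⟨W, hW, hdet⟩ := countable_determining (measurableSet_toMeasurable Pr S)
  have hsub : {ω : V → Bool | (cluster G ω x).Finite ∧ ∃ y ∈ cluster G ω x, y ∉ ctbl G} ⊆ B := by
    rintro ω ⟨hfin, y, hyc, hyct⟩
    have hNinf : (G.neighborSet y \ (W ∪ cluster G ω x)).Infinite := by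
      intro hFin
      exact hyct <| Set.Countable.mono (fun z hz => by
          by_cases hzc : z ∈ W ∪ cluster G ω x
          · exact Or.inr hzc
          · exact Or.inl ⟨hz, hzc⟩)
        ((hFin.countable.union (hW.union hfin.countable)))
    obtain ⟨Z, hZsub, hZcard⟩ := hNinf.exists_subset_card_eq n
    set ω'' : V → Bool := fun v => if v ∈ Z then true else ω v with hω''
    have hZW : ∀ v ∈ Z, v ∉ W ∪ cluster G ω x := fun v hv => (hZsub hv).2
    have hagree : ∀ v ∈ W, ω v = ω'' v := by
      intro v hv
      rw [hω'']
      simp only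
      rw [if_neg fun hvZ => hZW v hvZ (Or.inl hv)]
    have hmono : ∀ v, ω v = true → ω'' v = true := by
      intro v hv
      rw [hω'']
      simp only
      split <;> simp [hv]
    have hxo : ω x = true := hyc.1
    have hsubc : cluster G ω x ⊆ cluster G ω'' x := fun z hz =>
      ⟨hmono x hxo, hz.2.mono (percGraph_mono G hmono)⟩
    have hZc : ∀ z ∈ (Z : Set V), z ∈ cluster G ω'' x := by
      intro z hz
      have hy'' : y ∈ cluster G ω'' x := hsubc hyc
      refine ⟨hmono x hxo, hy''.2.trans (SimpleGraph.Adj.reachable (percGraph_adj_iff.2 ⟨(hZsub hz).1, ?_, ?_⟩))⟩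
      · exact hmono y (open_of_mem_cluster hyc)
      · rw [hω'']
        simp only
        rw [if_pos (Finset.mem_coe.1 hz)]
    have hω''S : ω'' ∈ S := by
      by_cases hinf : (cluster G ω'' x).Infinite
      · exact Or.inl hinf
      · right
        have hle : (Z : Set V).ncard ≤ (cluster G ω'' x).ncard :=
          Set.ncard_le_ncard hZc (Set.not_infinite.1 hinf)
        rw [Set.ncard_coe_finset, hZcard] at hle
        rw [Nat.card_coe_set_eq]
        exact hle
    exact (hdet ω ω'' hagree).2 (subset_toMeasurable Pr S hω''S)
  calc Pr {ω : V → Bool | (cluster G ω x).Finite ∧ ∃ y ∈ cluster G ω x, y ∉ ctbl G}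
      ≤ Pr B := measure_mono hsub
    _ = Pr S := measure_toMeasurable S
    _ ≤ ENNReal.ofReal (Real.exp (-a * n)) := hdec n hn

lemma aesm_phi_cluster (Pr : Measure (V → Bool)) (ha : 0 < a)
    (hdec : ∀ n : ℕ, 1 ≤ n →
      Pr {ω | (cluster G ω x).Infinite ∨ n ≤ Nat.card ↥(cluster G ω x)} ≤
        ENNReal.ofReal (Real.exp (-a * n)))
    (φ : Set V → ℝ) (hφ : φ ∅ = 0) :
    AEStronglyMeasurable (fun ω => φ (cluster G ω x)) Pr := by
  classical
  set T : Set (Set V) := {C | C.Finite ∧ C ⊆ Rset G x ∧ x ∈ C} with hT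
  have hTc : T.Countable := by
    refine Set.Countable.mono ?_ (Set.countable_setOf_finite_subset (Rset_countable G x))
    rintro C ⟨h1, h2, h3⟩
    exact ⟨h1, h2⟩
  haveI := hTc.to_subtype
  letI : MeasurableSpace (Option ↥T) := ⊤
  set κ : (V → Bool) → Option ↥T :=
    fun ω => if h : cluster G ω x ∈ T then some ⟨_, h⟩ else none with hκdef
  have hfib : ∀ C : ↥T, MeasurableSet {ω : V → Bool | cluster G ω x = ↑C} := by
    intro C
    obtain ⟨h1, h2, h3⟩ := C.2
    exact measurableSet_cluster_fiber h1 h3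
      (fun y hy => mem_ctbl_of_mem_Rset (h2 hy))
  have hfib_some : ∀ C : ↥T, κ ⁻¹' {some C} = {ω : V → Bool | cluster G ω x = ↑C} := by
    intro C
    ext ω
    simp only [Set.mem_preimage, Set.mem_singleton_iff, hκdef, Set.mem_setOf_eq]
    constructor
    · intro h
      by_cases hc : cluster G ω x ∈ T
      · rw [dif_pos hc] at h
        exact congrArg Subtype.val (Option.some_injective _ h)
      · rw [dif_neg hc] at h
        exact absurd h (by simp)
    · intro h
      have hc : cluster G ω x ∈ T := h ▸ C.2
      rw [dif_pos hc]
      exact congrArg some (Subtype.ext h)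
  have hκ : Measurable κ := by
    intro s _
    have hrw : κ ⁻¹' s = ⋃ o ∈ s, κ ⁻¹' {o} := by
      ext ω
      simp
    rw [hrw]
    refine MeasurableSet.biUnion (Set.to_countable s) fun o _ => ?_
    cases o with
    | none =>
      have : κ ⁻¹' {none} = (⋃ C : ↥T, {ω : V → Bool | cluster G ω x = ↑C})ᶜ := by
        ext ω
        simp only [Set.mem_preimage, Set.mem_singleton_iff, Set.mem_compl_iff,
          Set.mem_iUnion, Set.mem_setOf_eq, hκdef]
        constructor
        · intro h
          rintro ⟨C, hC⟩
          have hc : cluster G ω x ∈ T := hC ▸ C.2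
          rw [dif_pos hc] at h
          exact absurd h (by simp)
        · intro h
          rw [dif_neg]
          intro hc
          exact h ⟨⟨_, hc⟩, rfl⟩
      rw [this]
      exact (MeasurableSet.iUnion fun C => hfib C).compl
    | some C =>
      rw [hfib_some C]
      exact hfib C
  set g0 : (V → Bool) → ℝ := fun ω => (κ ω).elim 0 (fun C => φ ↑C) with hg0def
  have hg0 : Measurable g0 := by
    have hf : Measurable (fun o : Option ↥T => o.elim 0 (fun C => φ (C : Set V))) :=
      measurable_from_top
    exact hf.comp hκ
  have hN : Pr ({ω : V → Bool | (cluster G ω x).Infinite} ∪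
      {ω : V → Bool | (cluster G ω x).Finite ∧ ∃ y ∈ cluster G ω x, y ∉ ctbl G}) = 0 :=
    measure_union_null (bad1_null Pr ha hdec) (bad2_null Pr ha hdec)
  refine (hg0.stronglyMeasurable.aestronglyMeasurable).congr ?_
  have key : ∀ ω, ω ∉ ({ω : V → Bool | (cluster G ω x).Infinite} ∪
      {ω : V → Bool | (cluster G ω x).Finite ∧ ∃ y ∈ cluster G ω x, y ∉ ctbl G}) →
      g0 ω = φ (cluster G ω x) := by
    intro ω hω
    rw [Set.mem_union, not_or] at hω
    obtain ⟨h1, h2⟩ := hω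
    simp only [Set.mem_setOf_eq] at h1 h2
    by_cases hx : ω x = true
    · have hfin : (cluster G ω x).Finite := Set.not_infinite.1 h1
      push_neg at h2
      have hct : ∀ y ∈ cluster G ω x, y ∈ ctbl G := h2 hfin
      have hmem : cluster G ω x ∈ T := ⟨hfin, cluster_subset_Rset hct, mem_cluster_self hx⟩
      rw [hg0def]
      simp only [hκdef]
      rw [dif_pos hmem]
      rfl
    · have hempty : cluster G ω x = ∅ := by
        ext y
        simp only [Set.mem_empty_iff_false, iff_false]
        intro hy
        exact hx hy.1
      have hnmem : cluster G ω x ∉ T := by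
        rw [hempty]
        rintro ⟨-, -, hxin⟩
        exact hxin
      rw [hg0def]
      simp only [hκdef]
      rw [dif_neg hnmem, hempty]
      simpa using hφ.symm
  refine MeasureTheory.ae_iff.2 (measure_mono_null ?_ hN)
  intro ω hω
  by_contra hmem
  exact hω (key ω hmem)

end AuxNull
section AuxSpec2

variable {V : Type*}

lemma specDiag_nonneg (C : Set V) (M : Matrix C C ℝ) (x : V) (E : ℝ) :
    0 ≤ specDiag C M x E := by
  unfold specDiag
  split
  · refine Finset.sum_nonneg fun i _ => ?_
    split
    · positivity
    · exact le_refl 0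
  · exact le_refl 0

lemma specDiag_le_one (C : Set V) (M : Matrix C C ℝ) (x : V) (E : ℝ) :
    specDiag C M x E ≤ 1 := by
  unfold specDiag
  split
  next h =>
    letI : Fintype C := h.1.fintype
    refine le_trans (Finset.sum_le_sum (g := fun i => (h.2.1.eigenvectorBasis i) ⟨x, h.2.2⟩ ^ 2)
      fun i _ => ?_) (le_of_eq (sum_sq_eigenvectorBasis h.2.1 ⟨x, h.2.2⟩))
    split
    · exact le_refl _
    · positivity
  · exact zero_le_one

lemma specDiag_zero_of_not_mem {C : Set V} {x : V} (M : Matrix C C ℝ) (E : ℝ) (hx : x ∉ C) :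
    specDiag C M x E = 0 := by
  unfold specDiag
  rw [dif_neg]
  rintro ⟨-, -, hxC⟩
  exact hx hxC

lemma specDiag_gap (C : Set V) (M : Matrix C C ℝ) (x : V) {E : ℝ} (hE : 0 < E)
    (hgap : ∀ μ : ℝ, μ ≠ 0 →
      (∃ φ : ↥C → ℝ, φ ≠ 0 ∧ ∀ z : ↥C, (∑ᶠ y : ↥C, M z y * φ y) = μ * φ z) → E < μ) :
    specDiag C M x E = specDiag C M x 0 := by
  unfold specDiag
  split
  next h =>
    letI : Fintype C := h.1.fintype
    refine Finset.sum_congr rfl fun i _ => ?_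
    have hiff : (h.2.1.eigenvalues i ≤ E) ↔ (h.2.1.eigenvalues i ≤ 0) := by
      constructor
      · intro hle
        by_cases h0 : h.2.1.eigenvalues i = 0
        · exact h0.le
        · exact absurd hle (not_le.2 (hgap _ h0
            ⟨fun y => h.2.1.eigenvectorBasis i y, eigenvectorBasis_ne_zero h.2.1 i,
              fun z => eigenvectorBasis_eigen h.2.1 i z⟩))
      · intro hle
        exact hle.trans hE.le
    exact if_congr hiff rfl rfl
  · rfl

end AuxSpec2
section AuxMain

variable {V : Type*}

lemma integral_diff_le (G : SimpleGraph V) (Pr : Measure (V → Bool)) [IsProbabilityMeasure Pr]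
    (Hmat : ∀ C : Set V, Matrix C C ℝ) (a : ℝ) (ha : 0 < a) (x : V)
    (hdec : ∀ n : ℕ, 1 ≤ n →
      Pr {ω | (cluster G ω x).Infinite ∨ n ≤ Nat.card ↥(cluster G ω x)} ≤
        ENNReal.ofReal (Real.exp (-a * n)))
    (f : ℝ → ℝ) (hfanti : StrictAntiOn f (Set.Ici 1))
    (heig : ∀ C : Set V, C.Finite → C.Nonempty → (G.induce C).Connected →
      ∀ μ : ℝ, μ ≠ 0 →
        (∃ φ : ↥C → ℝ, φ ≠ 0 ∧ ∀ x : ↥C, (∑ᶠ y : ↥C, Hmat C x y * φ y) = μ * φ x) →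
        f (Nat.card ↥C : ℝ) ≤ μ)
    (E s : ℝ) (hE : 0 < E) (hs : 1 ≤ s) (hfs : f s = E) :
    (∫ ω, specDiag (cluster G ω x) (Hmat (cluster G ω x)) x E ∂Pr) -
      (∫ ω, specDiag (cluster G ω x) (Hmat (cluster G ω x)) x 0 ∂Pr) ≤
      Real.exp (-a * s) := by
  classical
  set g := fun ω : V → Bool => specDiag (cluster G ω x) (Hmat (cluster G ω x)) x E with hgdef
  set h := fun ω : V → Bool => specDiag (cluster G ω x) (Hmat (cluster G ω x)) x 0 with hhdef
  have hgm : AEStronglyMeasurable g Pr :=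
    aesm_phi_cluster Pr ha hdec (fun C => specDiag C (Hmat C) x E)
      (specDiag_zero_of_not_mem _ _ (Set.notMem_empty x))
  have hhm : AEStronglyMeasurable h Pr :=
    aesm_phi_cluster Pr ha hdec (fun C => specDiag C (Hmat C) x 0)
      (specDiag_zero_of_not_mem _ _ (Set.notMem_empty x))
  have hbound : ∀ (E' : ℝ) (ω : V → Bool),
      ‖specDiag (cluster G ω x) (Hmat (cluster G ω x)) x E'‖ ≤ 1 := by
    intro E' ω
    rw [Real.norm_eq_abs, abs_le]
    exact ⟨by linarith [specDiag_nonneg (cluster G ω x) (Hmat (cluster G ω x)) x E'],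
      specDiag_le_one _ _ _ _⟩
  have hgi : Integrable g Pr :=
    (integrable_const (1:ℝ)).mono' hgm (Filter.Eventually.of_forall (hbound E))
  have hhi : Integrable h Pr :=
    (integrable_const (1:ℝ)).mono' hhm (Filter.Eventually.of_forall (hbound 0))
  set n := ⌈s⌉₊ with hndef
  have hn1 : 1 ≤ n := Nat.one_le_ceil_iff.2 (lt_of_lt_of_le zero_lt_one hs)
  set S := {ω : V → Bool | (cluster G ω x).Infinite ∨ n ≤ Nat.card ↥(cluster G ω x)} with hSdef
  set B := toMeasurable Pr S with hBdef
  have hBmeas : MeasurableSet B := measurableSet_toMeasurable Pr S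
  have hpt : ∀ ω, g ω - h ω ≤ B.indicator (fun _ => (1:ℝ)) ω := by
    intro ω
    by_cases hωB : ω ∈ B
    · rw [Set.indicator_of_mem hωB]
      have h1 := specDiag_le_one (cluster G ω x) (Hmat (cluster G ω x)) x E
      have h2 := specDiag_nonneg (cluster G ω x) (Hmat (cluster G ω x)) x 0
      simp only [hgdef, hhdef]
      linarith
    · rw [Set.indicator_of_notMem hωB]
      have hωS : ω ∉ S := fun hωS => hωB (subset_toMeasurable Pr S hωS)
      rw [hSdef, Set.mem_setOf_eq, not_or, not_le] at hωS
      obtain ⟨hinf, hcard⟩ := hωS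
      have hfin : (cluster G ω x).Finite := Set.not_infinite.1 hinf
      by_cases hx : ω x = true
      · have heq : g ω = h ω := by
          refine specDiag_gap _ _ _ hE ?_
          intro μ hμ hex
          have hne : (cluster G ω x).Nonempty := ⟨x, mem_cluster_self hx⟩
          have hμge := heig (cluster G ω x) hfin hne (cluster_connected hx) μ hμ hex
          refine lt_of_lt_of_le ?_ hμge
          haveI := hfin.to_subtype
          haveI : Nonempty ↥(cluster G ω x) := ⟨⟨x, mem_cluster_self hx⟩⟩
          have hcpos : 1 ≤ Nat.card ↥(cluster G ω x) := Nat.one_le_iff_ne_zero.2 Nat.card_pos.ne'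
          have hlt : f s < f ((Nat.card ↥(cluster G ω x) : ℝ)) :=
            hfanti (Set.mem_Ici.2 (by exact_mod_cast hcpos)) (Set.mem_Ici.2 hs)
              (Nat.lt_ceil.1 hcard)
          rw [← hfs]
          exact hlt
        rw [heq]
        simp
      · have hxc : x ∉ cluster G ω x := fun hc => hx hc.1
        simp only [hgdef, hhdef]
        rw [specDiag_zero_of_not_mem _ _ hxc, specDiag_zero_of_not_mem _ _ hxc]
        simp
  have hind : Integrable (B.indicator (fun _ => (1:ℝ))) Pr :=
    (integrable_const (1:ℝ)).indicator hBmeas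
  have hint : (∫ ω, g ω ∂Pr) - (∫ ω, h ω ∂Pr) = ∫ ω, (g ω - h ω) ∂Pr :=
    (integral_sub hgi hhi).symm
  rw [hint]
  refine le_trans (integral_mono (hgi.sub hhi) hind hpt) ?_
  rw [integral_indicator_const (1:ℝ) hBmeas, smul_eq_mul, mul_one]
  have h1 : Pr B ≤ ENNReal.ofReal (Real.exp (-a * n)) := by
    rw [hBdef, measure_toMeasurable]
    exact hdec n hn1
  refine le_trans (ENNReal.toReal_le_of_le_ofReal (Real.exp_pos _).le h1) ?_
  apply Real.exp_le_exp.2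
  have hsn : s ≤ (n : ℝ) := Nat.le_ceil s
  nlinarith

end AuxMain
/-- On a quasi-transitive graph (a graph with a free, cofinite group action by
automorphisms, with finite fundamental domain `F`) with subcritical site percolation whose
cluster sizes decay exponentially, `P(|C_x| ≥ n) ≤ exp(−a·n)`, if every finite cluster `C`
satisfies `λ^#(C) ≥ f(|C|)` for a continuous, strictly decreasing `f : [1,∞) → ℝ⁺` tending to
`0`, then the IDS satisfies `N^#(E) − N^#(0) ≤ exp(−a·f⁻¹(E))` for `0 < E < f 1`. -/
theorem IDS_upper_bound_from_eigenvalue_lower_bound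
    {V : Type*} (G : SimpleGraph V)
    (Γ : Type*) [Group Γ] [MulAction Γ V]
    (hact : ∀ (γ : Γ) (x y : V), G.Adj (γ • x) (γ • y) ↔ G.Adj x y)
    (hfree : ∀ (γ : Γ) (x : V), γ • x = x → γ = 1)
    (F : Finset V) (hFne : F.Nonempty) (hcof : ∀ x : V, ∃ γ : Γ, γ • x ∈ F)
    (Pr : Measure (V → Bool)) [IsProbabilityMeasure Pr]
    (Hmat : ∀ C : Set V, Matrix C C ℝ) (hherm : ∀ C, (Hmat C).IsHermitian)
    (a : ℝ) (ha : 0 < a)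
    (hdecay : ∀ x ∈ F, ∀ n : ℕ, 1 ≤ n →
      Pr {ω | (cluster G ω x).Infinite ∨ n ≤ Nat.card ↥(cluster G ω x)} ≤
        ENNReal.ofReal (Real.exp (-a * n)))
    (f : ℝ → ℝ)
    (hfcont : ContinuousOn f (Set.Ici 1)) (hfanti : StrictAntiOn f (Set.Ici 1))
    (hfpos : ∀ s : ℝ, 1 ≤ s → 0 < f s) (hflim : Tendsto f atTop (nhds 0))
    (heig : ∀ C : Set V, C.Finite → C.Nonempty → (G.induce C).Connected →
      ∀ μ : ℝ, μ ≠ 0 →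
        (∃ φ : ↥C → ℝ, φ ≠ 0 ∧ ∀ x : ↥C, (∑ᶠ y : ↥C, Hmat C x y * φ y) = μ * φ x) →
        f (Nat.card ↥C : ℝ) ≤ μ) :
    ∀ E s : ℝ, 0 < E → E < f 1 → 1 ≤ s → f s = E →
      IDS G Pr Hmat F E - IDS G Pr Hmat F 0 ≤ Real.exp (-a * s) := by
  intro E s hE hEf hs hfs
  have key : ∀ x ∈ F, (∫ ω, specDiag (cluster G ω x) (Hmat (cluster G ω x)) x E ∂Pr) -
      (∫ ω, specDiag (cluster G ω x) (Hmat (cluster G ω x)) x 0 ∂Pr) ≤ Real.exp (-a * s) :=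
    fun x hx => integral_diff_le G Pr Hmat a ha x (hdecay x hx) f hfanti heig E s hE hs hfs
  unfold IDS
  rw [← mul_sub, ← Finset.sum_sub_distrib]
  have hcard : (0:ℝ) < (F.card : ℝ) := by exact_mod_cast Finset.card_pos.2 hFne
  have hsum : ∑ x ∈ F, ((∫ ω, specDiag (cluster G ω x) (Hmat (cluster G ω x)) x E ∂Pr) -
      (∫ ω, specDiag (cluster G ω x) (Hmat (cluster G ω x)) x 0 ∂Pr)) ≤
      (F.card : ℝ) * Real.exp (-a * s) := by
    refine le_trans (Finset.sum_le_card_nsmul F _ _ (fun x hx => key x hx)) ?_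
    rw [nsmul_eq_mul]
  refine le_trans (mul_le_mul_of_nonneg_left hsum (inv_nonneg.2 hcard.le)) ?_
  rw [← mul_assoc, inv_mul_cancel₀ (ne_of_gt hcard), one_mul]
end
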